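/- Let v, w be time-dependent vector fields on ℝ^d, uniformly L-Lipschitz in space, with flows φ^t, ψ^t respectively. Then for measures μ, ν of equal finite mass with finite p-th moments: W_p(φ^t#μ, ψ^t#ν) ≤ e^{Lt} W_p(μ,ν) + ((e^{Lt}−1)/L) · |μ| · sup_{τ∈[0,t]} ‖v_τ − w_τ‖_{C^0}. -/

import Mathlib

open MeasureTheory Set
open scoped ENNReal NNReal

noncomputable section

abbrev Rd (d : ℕ) := EuclideanSpace ℝ (Fin d)

/-- Transference plans: probability measures on the product with normalized marginals. -/
def IsPlan {d : ℕ} (μ ν : Measure (Rd d)) (π : Measure (Rd d × Rd d)) : Prop :=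
  IsProbabilityMeasure π ∧ π.map Prod.fst = (μ Set.univ)⁻¹ • μ ∧
    π.map Prod.snd = (ν Set.univ)⁻¹ • ν

/-- Cost of a plan. -/
def planCost {d : ℕ} (p : ℝ) (π : Measure (Rd d × Rd d)) : ℝ≥0∞ :=
  ∫⁻ q, (edist q.1 q.2) ^ p ∂π

/-- Mass-scaled Wasserstein distance `W_p(μ,ν) = |μ| (inf_π ∫ |x-y|^p dπ)^{1/p}`. -/
def Wp {d : ℕ} (p : ℝ) (μ ν : Measure (Rd d)) : ℝ≥0∞ :=
  μ Set.univ * (⨅ π : {π : Measure (Rd d × Rd d) // IsPlan μ ν π}, planCost p π.1) ^ (1/p)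

/-- Total variation norm `|μ - ν|` of the difference of two measures. -/
def tv {d : ℕ} (μ ν : Measure (Rd d)) : ℝ≥0∞ := (μ - ν) Set.univ + (ν - μ) Set.univ

/-- Finite mass and finite `p`-th moment. -/
def finMom {d : ℕ} (p : ℝ) (μ : Measure (Rd d)) : Prop :=
  IsFiniteMeasure μ ∧ ∫⁻ x, (‖x‖₊ : ℝ≥0∞) ^ p ∂μ ≠ ⊤

/-- The functional `T_p^{a,b}`. -/
def Tab {d : ℕ} (a b p : ℝ) (μ ν : Measure (Rd d)) : ℝ≥0∞ :=
  ⨅ (μ' : Measure (Rd d)) (ν' : Measure (Rd d)) (_ : IsFiniteMeasure μ')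
    (_ : IsFiniteMeasure ν') (_ : μ' Set.univ = ν' Set.univ),
    ENNReal.ofReal a ^ p * (tv μ μ' + tv ν ν') ^ p + ENNReal.ofReal b ^ p * Wp p μ' ν' ^ p

/-- The generalized Wasserstein distance `W_p^{a,b}`. -/
def Wab {d : ℕ} (a b p : ℝ) (μ ν : Measure (Rd d)) : ℝ≥0∞ := Tab a b p μ ν ^ (1/p)

/-- `φ` is the flow of the time-dependent vector field `v`. -/
def IsFlowOf {d : ℕ} (v : ℝ → Rd d → Rd d) (φ : ℝ → Rd d → Rd d) : Prop :=
  (∀ x, φ 0 x = x) ∧ (∀ x t, HasDerivAt (fun s => φ s x) (v t (φ t x)) t) ∧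
    ∀ t, Measurable (φ t)


/-- Pointwise Grönwall estimate for two flows. -/
lemma flow_dist_le {d : ℕ} (L : ℝ≥0) (hL : 0 < (L : ℝ)) (D : ℝ)
    (v w φ' ψ' : ℝ → Rd d → Rd d)
    (hv : ∀ t, LipschitzWith L (v t))
    (hφ : IsFlowOf v φ') (hψ : IsFlowOf w ψ') (t : ℝ) (ht : 0 ≤ t)
    (hD : ∀ τ ∈ Set.Icc (0:ℝ) t, ∀ x, ‖v τ x - w τ x‖ ≤ D) (x y : Rd d) :
    dist (φ' t x) (ψ' t y) ≤
      Real.exp (L * t) * dist x y + (Real.exp (L * t) - 1) / L * D := by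
  have hf : ∀ s, HasDerivAt (fun s => φ' s x) (v s (φ' s x)) s := fun s => hφ.2.1 x s
  have hg : ∀ s, HasDerivAt (fun s => ψ' s y) (w s (ψ' s y)) s := fun s => hψ.2.1 y s
  have key := dist_le_of_approx_trajectories_ODE (v := v) (K := L)
    (f := fun s => φ' s x) (f' := fun s => v s (φ' s x))
    (g := fun s => ψ' s y) (g' := fun s => w s (ψ' s y))
    (a := 0) (b := t) (εf := 0) (εg := D) (δ := dist x y)
    hv
    (Continuous.continuousOn (continuous_iff_continuousAt.2 fun s => (hf s).continuousAt))
    (fun τ _ => (hf τ).hasDerivWithinAt)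
    (fun τ _ => by simp)
    (Continuous.continuousOn (continuous_iff_continuousAt.2 fun s => (hg s).continuousAt))
    (fun τ _ => (hg τ).hasDerivWithinAt)
    (fun τ hτ => by
      rw [dist_eq_norm, norm_sub_rev]
      exact hD τ ⟨hτ.1, hτ.2.le⟩ _)
    (by simp [hφ.1, hψ.1])
  have h := key t ⟨ht, le_refl t⟩
  rw [gronwallBound_of_K_ne_0 (by exact_mod_cast hL.ne' : (L:ℝ) ≠ 0)] at h
  simp only [sub_zero, zero_add] at h
  calc dist (φ' t x) (ψ' t y)
      ≤ dist x y * Real.exp (L * t) + D / L * (Real.exp (L * t) - 1) := h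
    _ = Real.exp (L * t) * dist x y + (Real.exp (L * t) - 1) / L * D := by ring

/-- comparison of the push-forwards of two measures under the flows of
two different vector fields. -/
theorem Wp_two_flows_le {d : ℕ} (p : ℝ) (hp : 1 ≤ p) (L : ℝ≥0) (hL : 0 < (L : ℝ)) (D : ℝ)
    (v w φ' ψ' : ℝ → Rd d → Rd d)
    (hv : ∀ t, LipschitzWith L (v t)) (hw : ∀ t, LipschitzWith L (w t))
    (hφ : IsFlowOf v φ') (hψ : IsFlowOf w ψ')
    (μ ν : Measure (Rd d)) (hμ : finMom p μ) (hν : finMom p ν)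
    (hmass : μ Set.univ = ν Set.univ) (t : ℝ) (ht : 0 ≤ t)
    (hD : ∀ τ ∈ Set.Icc (0:ℝ) t, ∀ x, ‖v τ x - w τ x‖ ≤ D) :
    Wp p (μ.map (φ' t)) (ν.map (ψ' t)) ≤
      ENNReal.ofReal (Real.exp (L * t)) * Wp p μ ν +
        ENNReal.ofReal ((Real.exp (L * t) - 1) / L * D) * μ Set.univ := by
  obtain ⟨hμfin, -⟩ := hμ
  obtain ⟨hνfin, -⟩ := hν
  have hp0 : (0:ℝ) < p := by linarith
  have hp0' : p ≠ 0 := hp0.ne'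
  have hip : (0:ℝ) < 1/p := by positivity
  set M := μ Set.univ with hM
  have mφ : Measurable (φ' t) := hφ.2.2 t
  have mψ : Measurable (ψ' t) := hψ.2.2 t
  have hmapμ : (μ.map (φ' t)) Set.univ = M := by
    rw [Measure.map_apply mφ MeasurableSet.univ, Set.preimage_univ]
  have hmapν : (ν.map (ψ' t)) Set.univ = M := by
    rw [Measure.map_apply mψ MeasurableSet.univ, Set.preimage_univ, ← hmass]
  by_cases hM0 : M = 0
  · have hμ0 : μ = 0 := Measure.measure_univ_eq_zero.mp hM0
    have hν0 : ν = 0 := Measure.measure_univ_eq_zero.mp (by rw [← hmass]; exact hM0)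
    simp [Wp, hμ0, hν0]
  · have hMtop : M ≠ ⊤ := measure_ne_top μ _
    set a := ENNReal.ofReal (Real.exp (L * t)) with ha
    set C := (Real.exp (L * t) - 1) / L * D with hCdef
    have hD0 : 0 ≤ D := le_trans (norm_nonneg _) (hD 0 ⟨le_refl 0, ht⟩ 0)
    have hexp1 : 1 ≤ Real.exp (L * t) := Real.one_le_exp (mul_nonneg L.2 ht)
    have hC0 : 0 ≤ C := mul_nonneg (div_nonneg (by linarith) hL.le) hD0
    -- normalized measures are probability measures
    have hMinv : M⁻¹ * M = 1 := ENNReal.inv_mul_cancel hM0 hMtop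
    haveI pμ : IsProbabilityMeasure (M⁻¹ • μ) :=
      ⟨by rw [Measure.smul_apply, smul_eq_mul, ← hM, hMinv]⟩
    haveI pν : IsProbabilityMeasure (M⁻¹ • ν) :=
      ⟨by rw [Measure.smul_apply, smul_eq_mul, ← hmass, hMinv]⟩
    have hplan0 : IsPlan μ ν ((M⁻¹ • μ).prod (M⁻¹ • ν)) := by
      refine ⟨inferInstance, ?_, ?_⟩
      · rw [Measure.map_fst_prod, measure_univ, one_smul, ← hM]
      · rw [Measure.map_snd_prod, measure_univ, one_smul, ← hmass]
    haveI : Nonempty {π : Measure (Rd d × Rd d) // IsPlan μ ν π} := ⟨⟨_, hplan0⟩⟩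
    -- pointwise estimate
    have hCpt : ∀ x y : Rd d, edist (φ' t x) (ψ' t y) ≤ a * edist x y + ENNReal.ofReal C := by
      intro x y
      rw [edist_dist, edist_dist, ha, ← ENNReal.ofReal_mul (Real.exp_nonneg _),
        ← ENNReal.ofReal_add (by positivity) hC0]
      exact ENNReal.ofReal_le_ofReal (flow_dist_le L hL D v w φ' ψ' hv hφ hψ t ht hD x y)
    have hmeas : Measurable fun q : Rd d × Rd d => edist q.1 q.2 ^ p :=
      (measurable_fst.edist measurable_snd).pow_const p
    -- main estimate for a plan
    have costbound : ∀ π : Measure (Rd d × Rd d), IsPlan μ ν π →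
        IsPlan (μ.map (φ' t)) (ν.map (ψ' t)) (π.map (Prod.map (φ' t) (ψ' t))) ∧
        planCost p (π.map (Prod.map (φ' t) (ψ' t))) ^ (1/p) ≤
          a * planCost p π ^ (1/p) + ENNReal.ofReal C := by
      intro π hπ
      haveI := hπ.1
      have mpm : Measurable (Prod.map (φ' t) (ψ' t)) := mφ.prodMap mψ
      constructor
      · refine ⟨Measure.isProbabilityMeasure_map mpm.aemeasurable, ?_, ?_⟩
        · rw [Measure.map_map measurable_fst mpm,
            show (Prod.fst ∘ Prod.map (φ' t) (ψ' t) : Rd d × Rd d → Rd d)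
              = (φ' t) ∘ Prod.fst from rfl,
            ← Measure.map_map mφ measurable_fst, hπ.2.1, hmapμ, Measure.map_smul, hM]
        · rw [Measure.map_map measurable_snd mpm,
            show (Prod.snd ∘ Prod.map (φ' t) (ψ' t) : Rd d × Rd d → Rd d)
              = (ψ' t) ∘ Prod.snd from rfl,
            ← Measure.map_map mψ measurable_snd, hπ.2.2, hmapν, Measure.map_smul, ← hmass]
      · have h1 : planCost p (π.map (Prod.map (φ' t) (ψ' t)))
            = ∫⁻ q, edist (φ' t q.1) (ψ' t q.2) ^ p ∂π := by
          rw [planCost, lintegral_map hmeas mpm]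
          rfl
        have h2 : (∫⁻ q, edist (φ' t q.1) (ψ' t q.2) ^ p ∂π) ≤
            ∫⁻ q, (a * edist q.1 q.2 + ENNReal.ofReal C) ^ p ∂π :=
          lintegral_mono fun q => ENNReal.rpow_le_rpow (hCpt q.1 q.2) hp0.le
        have h3 := ENNReal.lintegral_Lp_add_le
          (f := fun q : Rd d × Rd d => a * edist q.1 q.2)
          (g := fun _ => ENNReal.ofReal C) (μ := π)
          (measurable_const.mul (measurable_fst.edist measurable_snd)).aemeasurable
          measurable_const.aemeasurable hp
        have e1 : (∫⁻ q : Rd d × Rd d, (a * edist q.1 q.2) ^ p ∂π) ^ (1/p)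
            = a * planCost p π ^ (1/p) := by
          simp_rw [ENNReal.mul_rpow_of_nonneg _ _ hp0.le]
          rw [lintegral_const_mul _ hmeas,
            ENNReal.mul_rpow_of_nonneg _ _ hip.le, ← ENNReal.rpow_mul,
            mul_one_div_cancel hp0', ENNReal.rpow_one]
          rfl
        have e2 : (∫⁻ _q : Rd d × Rd d, (ENNReal.ofReal C) ^ p ∂π) ^ (1/p)
            = ENNReal.ofReal C := by
          rw [lintegral_const, measure_univ, mul_one, ← ENNReal.rpow_mul,
            mul_one_div_cancel hp0', ENNReal.rpow_one]
        calc planCost p (π.map (Prod.map (φ' t) (ψ' t))) ^ (1/p)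
            ≤ (∫⁻ q, (a * edist q.1 q.2 + ENNReal.ofReal C) ^ p ∂π) ^ (1/p) := by
              rw [h1]; exact ENNReal.rpow_le_rpow h2 hip.le
          _ ≤ (∫⁻ q : Rd d × Rd d, (a * edist q.1 q.2) ^ p ∂π) ^ (1/p)
              + (∫⁻ _q : Rd d × Rd d, (ENNReal.ofReal C) ^ p ∂π) ^ (1/p) := h3
          _ = a * planCost p π ^ (1/p) + ENNReal.ofReal C := by rw [e1, e2]
    -- put everything together
    simp only [Wp]
    rw [hmapμ, ← hM]
    have step : (⨅ π' : {π : Measure (Rd d × Rd d) //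
          IsPlan (μ.map (φ' t)) (ν.map (ψ' t)) π}, planCost p π'.1) ^ (1/p)
        ≤ a * (⨅ π : {π : Measure (Rd d × Rd d) // IsPlan μ ν π}, planCost p π.1) ^ (1/p)
          + ENNReal.ofReal C := by
      have h4 : ∀ π : {π : Measure (Rd d × Rd d) // IsPlan μ ν π},
          (⨅ π' : {π : Measure (Rd d × Rd d) //
            IsPlan (μ.map (φ' t)) (ν.map (ψ' t)) π}, planCost p π'.1) ^ (1/p)
          ≤ a * planCost p π.1 ^ (1/p) + ENNReal.ofReal C := by
        intro π
        obtain ⟨hplan, hcost⟩ := costbound π.1 π.2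
        exact le_trans (ENNReal.rpow_le_rpow (iInf_le _ ⟨_, hplan⟩) hip.le) hcost
      have h5 := le_iInf h4
      rw [← ENNReal.iInf_add,
        ← ENNReal.mul_iInf (fun h _ => absurd h ENNReal.ofReal_ne_top)] at h5
      have hrpow : (⨅ π : {π : Measure (Rd d × Rd d) // IsPlan μ ν π}, planCost p π.1) ^ (1/p)
          = ⨅ π : {π : Measure (Rd d × Rd d) // IsPlan μ ν π}, planCost p π.1 ^ (1/p) := by
        have h6 := OrderIso.map_iInf (ENNReal.orderIsoRpow (1/p) hip)
          (fun π : {π : Measure (Rd d × Rd d) // IsPlan μ ν π} => planCost p π.1)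
        simp only [ENNReal.orderIsoRpow_apply] at h6
        exact h6
      rwa [hrpow]
    calc M * (⨅ π' : {π : Measure (Rd d × Rd d) //
          IsPlan (μ.map (φ' t)) (ν.map (ψ' t)) π}, planCost p π'.1) ^ (1/p)
        ≤ M * (a * (⨅ π : {π : Measure (Rd d × Rd d) // IsPlan μ ν π}, planCost p π.1) ^ (1/p)
            + ENNReal.ofReal C) := mul_le_mul_right step M
      _ = a * (M * (⨅ π : {π : Measure (Rd d × Rd d) // IsPlan μ ν π},
            planCost p π.1) ^ (1/p)) + ENNReal.ofReal C * M := by ring
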